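/- Let (X, g, J) be a Kähler manifold of real dimension 2n and Y a totally real totally geodesic n-dimensional submanifold such that the mixed sectional curvature of X with respect to Y is a constant c, i.e. Rm^X(ζ, Jη, Jη, ζ) = c for all unit tangent fields ζ, η of Y. Then the induced metric g|_Y is Einstein. -/
import Mathlib


open scoped RealInnerProductSpace

/-- Let `(X,g,J)` be Kähler–Einstein (`Ric_g = λg`) of real dimension `2n` and `Y` a
totally real totally geodesic `n`-dimensional submanifold such that the mixed sectional
curvature of `X` with respect to `Y` is a constant `c`, i.e.
`Rm^X(ζ, Jη, Jη, ζ) = c` for all unit tangent fields `ζ, η` of `Y`.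
Then the induced metric `g|_Y` is Einstein.

Pointwise model: `V` the ambient tangent space with metric the inner product, `W = T_Y`,
`R` the curvature endomorphism (trilinear), `Rm a b c d = ⟪R a b c, d⟫` the
(0,4)-tensor with the usual symmetries, `(e_α)` an adapted orthonormal frame,
and `Ric_{g|_Y}` given by the Gauss-equation trace formula for the totally geodesic `Y`. -/
theorem stmt_13 {V : Type*} [NormedAddCommGroup V] [InnerProductSpace ℝ V]
    (n : ℕ) (hn : 1 ≤ n)
    (J : V →ₗ[ℝ] V) (hJ : ∀ v, J (J v) = -v)
    (hJiso : ∀ u v, ⟪J u, J v⟫ = ⟪u, v⟫)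
    (W : Submodule ℝ V) (htotreal : W ⊓ W.map J = ⊥)
    (e : Fin n → V) (he : ∀ α, e α ∈ W)
    (horth : ∀ α β, ⟪e α, e β⟫ = if α = β then (1:ℝ) else 0)
    (hbasis : ∀ w ∈ W, w = ∑ α, ⟪w, e α⟫ • e α)     -- (e_α) is an orthonormal basis of T_Y
    (R : V →ₗ[ℝ] V →ₗ[ℝ] V →ₗ[ℝ] V)                 -- the curvature endomorphism
    (hRanti : ∀ a b c d, ⟪R a b c, d⟫ = -⟪R b a c, d⟫   -- curvature symmetries
      )
    (hRanti' : ∀ a b c d, ⟪R a b c, d⟫ = -⟪R a b d, c⟫)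
    (hRpair : ∀ a b c d, ⟪R a b c, d⟫ = ⟪R c d a, b⟫)
    (hRJ : ∀ a b c, R a b (J c) = J (R a b c))       -- Kähler identity
    (lam : ℝ)
    (hEin : ∀ ζ η,                                    -- ambient Einstein: Ric_g = λ g
      ((∑ α, ⟪R (e α) ζ η, e α⟫) + ∑ α, ⟪R (J (e α)) ζ η, J (e α)⟫) = lam * ⟪ζ, η⟫)
    (RicY : V → V → ℝ)
    (hRicY : ∀ ζ η, ζ ∈ W → η ∈ W →                   -- Gauss formula (Y totally geodesic)
      RicY ζ η = ∑ α, ⟪R (e α) ζ η, e α⟫)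
    (c : ℝ)
    (hmixed : ∀ ζ η, ζ ∈ W → η ∈ W → ⟪ζ, ζ⟫ = 1 → ⟪η, η⟫ = 1 →
      ⟪R ζ (J η) (J η), ζ⟫ = c) :                    -- constant mixed sectional curvature
    ∃ κ : ℝ, ∀ ζ η, ζ ∈ W → η ∈ W → RicY ζ η = κ * ⟪ζ, η⟫ := by

  classical
  -- symmetry: ⟪R a b b, d⟫ = ⟪R d b b, a⟫
  have hsym : ∀ a b d : V, ⟪R a b b, d⟫ = ⟪R d b b, a⟫ := by
    intro a b d
    rw [hRpair a b b d, hRanti, hRanti', neg_neg, hRpair]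
  -- quadratic form of the mixed curvature hypothesis
  have hquad : ∀ ζ, ζ ∈ W → ∀ α : Fin n,
      ⟪R ζ (J (e α)) (J (e α)), ζ⟫ = c * ⟪ζ, ζ⟫ := by
    intro ζ hζ α
    by_cases h0 : ζ = 0
    · simp [h0]
    · have hpos : (0:ℝ) < ⟪ζ, ζ⟫ := by
        rw [real_inner_self_eq_norm_sq]
        exact pow_pos (norm_pos_iff.mpr h0) 2
      set t : ℝ := Real.sqrt ⟪ζ, ζ⟫ with ht
      have ht0 : t ≠ 0 := by positivity
      have ht2 : t * t = ⟪ζ, ζ⟫ := Real.mul_self_sqrt hpos.le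
      set u : V := t⁻¹ • ζ with hu
      have huW : u ∈ W := W.smul_mem _ hζ
      have huu : ⟪u, u⟫ = 1 := by
        rw [hu, real_inner_smul_left, real_inner_smul_right, ← ht2]
        field_simp
      have hee : ⟪e α, e α⟫ = 1 := by simpa using horth α α
      have hm := hmixed u (e α) huW (he α) huu hee
      have hζu : ζ = t • u := by rw [hu, smul_inv_smul₀ ht0]
      calc ⟪R ζ (J (e α)) (J (e α)), ζ⟫
          = t * t * ⟪R u (J (e α)) (J (e α)), u⟫ := by
            rw [hζu]
            simp only [map_smul, LinearMap.smul_apply, real_inner_smul_left,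
              real_inner_smul_right]
            ring
        _ = c * ⟪ζ, ζ⟫ := by rw [hm, ht2]; ring
  -- bilinear version by polarization
  have hbil : ∀ ζ η, ζ ∈ W → η ∈ W → ∀ α : Fin n,
      ⟪R ζ (J (e α)) (J (e α)), η⟫ = c * ⟪ζ, η⟫ := by
    intro ζ η hζ hη α
    have h1 := hquad (ζ + η) (W.add_mem hζ hη) α
    have h2 := hquad ζ hζ α
    have h3 := hquad η hη α
    have hs := hsym η (J (e α)) ζ
    simp only [map_add, LinearMap.add_apply, inner_add_left, inner_add_right] at h1
    rw [hs] at h1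
    have hcomm : ⟪η, ζ⟫ = ⟪ζ, η⟫ := real_inner_comm ζ η
    rw [hcomm] at h1
    linarith
  -- conclusion
  refine ⟨lam - n * c, fun ζ η hζ hη => ?_⟩
  have hE := hEin ζ η
  have hJsum : (∑ α, ⟪R (J (e α)) ζ η, J (e α)⟫) = n * c * ⟪ζ, η⟫ := by
    have : ∀ α : Fin n, ⟪R (J (e α)) ζ η, J (e α)⟫ = c * ⟪ζ, η⟫ := by
      intro α
      rw [hRpair (J (e α)) ζ η (J (e α)), hbil η ζ hη hζ α, real_inner_comm]
    rw [Finset.sum_congr rfl (fun α _ => this α)]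
    simp [mul_assoc]
  rw [hRicY ζ η hζ hη]
  have : (∑ α, ⟪R (e α) ζ η, e α⟫) = lam * ⟪ζ, η⟫ - n * c * ⟪ζ, η⟫ := by
    rw [← hE, hJsum]; ring
  rw [this]; ring
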